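/- If X_1, ..., X_n are i.i.d. uniform on the unit circle in ℝ² with n ≥ 2, then P(0 ∈ conv{X_1, ..., X_n}) = 1 - n·(1/2)^{n-1}. -/

import Mathlib

open MeasureTheory ProbabilityTheory Real

open Set


noncomputable def circν : Measure ℝ :=
  (ENNReal.ofReal (2 * π))⁻¹ • volume.restrict (Set.Ico (0:ℝ) (2 * π))

lemma two_pi_pos' : (0:ℝ) < 2 * π := by positivity

instance : IsProbabilityMeasure circν := by
  constructor
  rw [circν, Measure.smul_apply, Measure.restrict_apply MeasurableSet.univ, Set.univ_inter,
    Real.volume_Ico, smul_eq_mul, sub_zero]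
  exact ENNReal.inv_mul_cancel (by simp [Real.pi_pos, two_pi_pos'.ne']) ENNReal.ofReal_ne_top

lemma circν_apply (s : Set ℝ) (hs : MeasurableSet s) :
    circν s = (ENNReal.ofReal (2 * π))⁻¹ * volume (s ∩ Set.Ico 0 (2 * π)) := by
  rw [circν, Measure.smul_apply, Measure.restrict_apply hs, smul_eq_mul]

lemma sin_nonpos_of_mem (x : ℝ) (h1 : π ≤ x) (h2 : x ≤ 2 * π) : sin x ≤ 0 := by
  have := Real.sin_nonneg_of_nonneg_of_le_pi (x := x - π) (by linarith) (by linarith)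
  rw [Real.sin_sub_pi] at this; linarith

lemma sin_nonpos_of_mem' (x : ℝ) (h1 : -π ≤ x) (h2 : x ≤ 0) : sin x ≤ 0 := by
  have := Real.sin_nonneg_of_nonneg_of_le_pi (x := -x) (by linarith) (by linarith)
  rw [Real.sin_neg] at this; linarith

/-- the half-circle has measure 1/2 -/
lemma circν_half (t : ℝ) : circν {u : ℝ | 0 < sin (u - t)} = 2⁻¹ := by
  have hms : MeasurableSet {u : ℝ | 0 < sin (u - t)} := by
    have : Continuous fun u : ℝ => sin (u - t) := by fun_prop
    exact measurableSet_lt measurable_const this.measurable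
  -- replace t by its reduction mod 2π
  set t' := toIcoMod two_pi_pos' 0 t with ht'
  have ht'mem : t' ∈ Set.Ico (0:ℝ) (0 + 2 * π) := toIcoMod_mem_Ico two_pi_pos' 0 t
  rw [zero_add] at ht'mem
  have hsin : ∀ u, sin (u - t) = sin (u - t') := by
    intro u
    have : t = t' + toIcoDiv two_pi_pos' 0 t • (2 * π) := (toIcoMod_add_toIcoDiv_zsmul _ 0 t).symm
    rw [this]
    have : u - (t' + toIcoDiv two_pi_pos' 0 t • (2 * π)) =
        u - t' - (toIcoDiv two_pi_pos' 0 t : ℝ) * (2 * π) := by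
      push_cast [zsmul_eq_mul]; ring
    rw [this, Real.sin_sub_int_mul_two_pi]
  have hset : {u : ℝ | 0 < sin (u - t)} = {u : ℝ | 0 < sin (u - t')} := by
    ext u; simp [hsin u]
  rw [hset] at hms ⊢
  rw [circν_apply _ hms]
  have hvol : volume ({u : ℝ | 0 < sin (u - t')} ∩ Set.Ico 0 (2 * π)) = ENNReal.ofReal π := by
    rcases lt_or_ge t' π with hc | hc
    · -- set = Ioo t' (t' + π)
      have : {u : ℝ | 0 < sin (u - t')} ∩ Set.Ico 0 (2 * π) = Set.Ioo t' (t' + π) := by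
        ext u
        simp only [Set.mem_inter_iff, Set.mem_setOf_eq, Set.mem_Ico, Set.mem_Ioo]
        constructor
        · rintro ⟨hs, h0, h2⟩
          constructor
          · by_contra h; push_neg at h
            have := sin_nonpos_of_mem' (u - t') (by linarith [ht'mem.2]) (by linarith)
            linarith
          · by_contra h; push_neg at h
            have := sin_nonpos_of_mem (u - t') (by linarith) (by linarith [ht'mem.1])
            linarith
        · rintro ⟨h1, h2⟩
          refine ⟨Real.sin_pos_of_pos_of_lt_pi (by linarith) (by linarith), ⟨by linarith [ht'mem.1], by linarith⟩⟩
      rw [this, Real.volume_Ioo]; ring_nf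
    · -- set = Ico 0 (t' - π) ∪ Ioo t' (2π)
      have : {u : ℝ | 0 < sin (u - t')} ∩ Set.Ico 0 (2 * π)
          = Set.Ico 0 (t' - π) ∪ Set.Ioo t' (2 * π) := by
        ext u
        simp only [Set.mem_inter_iff, Set.mem_setOf_eq, Set.mem_Ico, Set.mem_union, Set.mem_Ioo]
        constructor
        · rintro ⟨hs, h0, h2⟩
          rcases lt_or_ge u t' with hu | hu
          · left
            refine ⟨h0, ?_⟩
            by_contra h; push_neg at h
            have := sin_nonpos_of_mem' (u - t') (by linarith) (by linarith)
            linarith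
          · right
            refine ⟨?_, h2⟩
            rcases eq_or_lt_of_le hu with rfl | hu'
            · simp at hs
            · exact hu'
        · rintro h
          rcases h with ⟨h1, h2⟩ | ⟨h1, h2⟩
          · refine ⟨?_, h1, by linarith [ht'mem.2]⟩
            have : sin (u - t') = sin (u - t' + 2 * π) := by
              rw [Real.sin_add_two_pi]
            rw [this]
            exact Real.sin_pos_of_pos_of_lt_pi (by linarith [ht'mem.2]) (by linarith [ht'mem.2])
          · refine ⟨?_, by linarith [ht'mem.1], h2⟩
            exact Real.sin_pos_of_pos_of_lt_pi (by linarith) (by linarith)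
      rw [this, measure_union _ measurableSet_Ioo, Real.volume_Ico, Real.volume_Ioo,
        ← ENNReal.ofReal_add (by linarith [ht'mem.2]) (by linarith [ht'mem.2])]
      · ring_nf
      · apply Set.disjoint_left.2
        rintro u ⟨h1, h2⟩ ⟨h3, h4⟩
        linarith [Real.pi_pos]
  rw [hvol]
  have h2π : ENNReal.ofReal (2 * π) = 2 * ENNReal.ofReal π := by
    rw [ENNReal.ofReal_mul (by norm_num)]; norm_num
  rw [h2π, ENNReal.mul_inv (by norm_num) (by simp), mul_assoc,
    ENNReal.inv_mul_cancel (by simp [Real.pi_pos]) ENNReal.ofReal_ne_top, mul_one]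

lemma circν_sin_zero (t : ℝ) : circν {u : ℝ | sin (u - t) = 0} = 0 := by
  have hsub : {u : ℝ | sin (u - t) = 0} ⊆ Set.range (fun k : ℤ => t + k * π) := by
    intro u hu
    rw [Set.mem_setOf_eq, Real.sin_eq_zero_iff] at hu
    obtain ⟨k, hk⟩ := hu
    exact ⟨k, show t + k * π = u by linarith⟩
  have hvol : volume {u : ℝ | sin (u - t) = 0} = 0 :=
    measure_mono_null hsub ((Set.countable_range _).measure_zero _)
  rw [circν, Measure.smul_apply, smul_eq_mul]
  have h0 : volume.restrict (Set.Ico (0:ℝ) (2*π)) {u : ℝ | sin (u - t) = 0} = 0 :=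
    le_antisymm ((Measure.restrict_apply_le _ _).trans_eq hvol) zero_le
  rw [h0, mul_zero]

variable {n : ℕ}


lemma halfspace_convex (a b : ℝ) : Convex ℝ {p : ℝ × ℝ | 0 < a * p.1 + b * p.2} := by
  have h : IsLinearMap ℝ (fun p : ℝ × ℝ => a * p.1 + b * p.2) :=
    ⟨fun x y => by simp only [Prod.fst_add, Prod.snd_add]; ring,
     fun c x => by simp only [Prod.smul_fst, Prod.smul_snd, smul_eq_mul]; ring⟩
  exact convex_halfSpace_gt h 0

lemma notMem_convexHull_iff (y : Fin n → ℝ × ℝ) :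
    (0:ℝ×ℝ) ∉ convexHull ℝ (Set.range y) ↔ ∃ a b : ℝ, ∀ i, 0 < a * (y i).1 + b * (y i).2 := by
  constructor
  · intro h
    obtain ⟨f, u, h0, hb⟩ := geometric_hahn_banach_point_closed
      (convex_convexHull ℝ _) ((Set.finite_range y).isClosed_convexHull (𝕜 := ℝ)) h
    refine ⟨f (1,0), f (0,1), fun i => ?_⟩
    have hy : y i ∈ convexHull ℝ (Set.range y) := subset_convexHull ℝ _ ⟨i, rfl⟩
    have hu := hb _ hy
    have h0' : f 0 = 0 := map_zero f
    have hfy : f (y i) = f (1,0) * (y i).1 + f (0,1) * (y i).2 := by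
      have hyi : y i = (y i).1 • ((1:ℝ),(0:ℝ)) + (y i).2 • ((0:ℝ),(1:ℝ)) := by
        ext <;> simp
      nth_rewrite 1 [hyi]
      rw [map_add, f.map_smul, f.map_smul, smul_eq_mul, smul_eq_mul]; ring
    rw [← hfy]; linarith
  · rintro ⟨a, b, hab⟩ h
    have hsub : convexHull ℝ (Set.range y) ⊆ {p : ℝ×ℝ | 0 < a * p.1 + b * p.2} :=
      convexHull_min (by rintro p ⟨i, rfl⟩; exact hab i) (halfspace_convex a b)
    have := hsub h
    simp only [Set.mem_setOf_eq] at this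
    norm_num at this

lemma exists_rat_dir [Nonempty (Fin n)] (y : Fin n → ℝ × ℝ)
    (a b : ℝ) (h : ∀ i, 0 < a * (y i).1 + b * (y i).2) :
    ∃ q r : ℚ, ∀ i, 0 < (q:ℝ) * (y i).1 + (r:ℝ) * (y i).2 := by
  set m := Finset.univ.inf' Finset.univ_nonempty (fun i => a * (y i).1 + b * (y i).2) with hm'
  have hm : 0 < m := by
    rw [hm', Finset.lt_inf'_iff]
    exact fun i _ => h i
  set M := Finset.univ.sup' Finset.univ_nonempty (fun i => |(y i).1| + |(y i).2|) with hM'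
  have hMi : ∀ i, |(y i).1| + |(y i).2| ≤ M := fun i => by
    rw [hM']
    exact Finset.le_sup' (fun i => |(y i).1| + |(y i).2|) (Finset.mem_univ i)
  have hM0 : 0 ≤ M := le_trans (by positivity) (hMi (Classical.arbitrary _))
  set ε := m / (2 * (M + 1)) with hε'
  have hε : 0 < ε := by positivity
  obtain ⟨q, hq1, hq2⟩ := exists_rat_btwn (show a < a + ε by linarith)
  obtain ⟨r, hr1, hr2⟩ := exists_rat_btwn (show b < b + ε by linarith)
  refine ⟨q, r, fun i => ?_⟩
  have h1 : ((q:ℝ) - a) * (y i).1 ≥ -(ε * |(y i).1|) := by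
    nlinarith [neg_abs_le (y i).1, le_abs_self (y i).1, abs_nonneg (y i).1]
  have h2 : ((r:ℝ) - b) * (y i).2 ≥ -(ε * |(y i).2|) := by
    nlinarith [neg_abs_le (y i).2, le_abs_self (y i).2, abs_nonneg (y i).2]
  have h3 : ε * (|(y i).1| + |(y i).2|) ≤ ε * M := by
    have := hMi i; nlinarith
  have h4 : ε * M < m := by
    rw [hε']
    rw [div_mul_eq_mul_div, div_lt_iff₀ (by positivity)]
    nlinarith
  have h5 : m ≤ a * (y i).1 + b * (y i).2 := by
    rw [hm']
    exact Finset.inf'_le _ (Finset.mem_univ i)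
  nlinarith
lemma measurableSet_E [Nonempty (Fin n)] :
    MeasurableSet {y : Fin n → ℝ × ℝ | (0:ℝ×ℝ) ∈ convexHull ℝ (Set.range y)} := by
  have hc : {y : Fin n → ℝ × ℝ | (0:ℝ×ℝ) ∈ convexHull ℝ (Set.range y)}ᶜ
      = ⋃ q : ℚ × ℚ, ⋂ i, {y : Fin n → ℝ × ℝ | 0 < (q.1:ℝ) * (y i).1 + (q.2:ℝ) * (y i).2} := by
    ext y
    simp only [Set.mem_compl_iff, Set.mem_setOf_eq, Set.mem_iUnion, Set.mem_iInter]
    rw [notMem_convexHull_iff]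
    constructor
    · rintro ⟨a, b, h⟩
      obtain ⟨q, r, h'⟩ := exists_rat_dir y a b h
      exact ⟨(q, r), h'⟩
    · rintro ⟨⟨q, r⟩, h⟩
      exact ⟨q, r, h⟩
  rw [← compl_compl {y : Fin n → ℝ × ℝ | (0:ℝ×ℝ) ∈ convexHull ℝ (Set.range y)}, hc]
  apply MeasurableSet.compl
  refine MeasurableSet.iUnion fun q => MeasurableSet.iInter fun i => ?_
  exact measurableSet_lt measurable_const
    (((measurable_fst.comp (measurable_pi_apply i)).const_mul _).add
      ((measurable_snd.comp (measurable_pi_apply i)).const_mul _))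

lemma bwd_lemma (θ : Fin n → ℝ) (i : Fin n) (h : ∀ j, j ≠ i → 0 < sin (θ j - θ i)) :
    (0:ℝ×ℝ) ∉ convexHull ℝ (Set.range fun j => (cos (θ j), sin (θ j))) := by
  have hev : ∀ᶠ δ : ℝ in nhds 0, (∀ j, j ≠ i → 0 < sin (θ j - θ i + δ)) ∧ δ < π := by
    refine Filter.Eventually.and ?_ ?_
    · rw [Filter.eventually_all]
      intro j
      by_cases hj : j = i
      · exact Filter.Eventually.of_forall fun δ h' => absurd hj h'
      · have hc : Continuous fun δ : ℝ => sin (θ j - θ i + δ) := by fun_prop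
        have h0 : (0:ℝ) < sin (θ j - θ i + 0) := by rw [add_zero]; exact h j hj
        have := (hc.continuousAt (x := 0)).preimage_mem_nhds (Ioi_mem_nhds h0)
        exact (Filter.eventually_iff_exists_mem.2 ⟨_, this, fun δ hδ _ => hδ⟩)
    · exact Filter.eventually_of_mem (Iio_mem_nhds Real.pi_pos) fun δ hδ => hδ
  have hself : ∀ᶠ δ : ℝ in nhdsWithin 0 (Set.Ioi 0), δ ∈ Set.Ioi (0:ℝ) :=
    Filter.eventually_of_mem self_mem_nhdsWithin fun δ hδ => hδ
  obtain ⟨δ, ⟨hδj, hδπ⟩, hδpos⟩ := ((hev.filter_mono nhdsWithin_le_nhds).and hself).exists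
  rw [Set.mem_Ioi] at hδpos
  intro hmem
  have hsub : convexHull ℝ (Set.range fun j => (cos (θ j), sin (θ j)))
      ⊆ {p : ℝ × ℝ | 0 < (-Real.sin (θ i - δ)) * p.1 + Real.cos (θ i - δ) * p.2} := by
    refine convexHull_min ?_ (halfspace_convex _ _)
    rintro p ⟨j, rfl⟩
    show 0 < -Real.sin (θ i - δ) * cos (θ j) + Real.cos (θ i - δ) * sin (θ j)
    have hval : sin (θ j - θ i + δ) = -Real.sin (θ i - δ) * cos (θ j) + Real.cos (θ i - δ) * sin (θ j) := by
      rw [show θ j - θ i + δ = θ j - (θ i - δ) by ring, Real.sin_sub (θ j) (θ i - δ)]; ring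
    rw [← hval]
    by_cases hj : j = i
    · subst hj
      rw [show θ j - θ j + δ = δ by ring]
      exact Real.sin_pos_of_pos_of_lt_pi hδpos hδπ
    · exact hδj j hj
  have := hsub hmem
  simp only [Set.mem_setOf_eq] at this
  norm_num at this

lemma fwd_lemma [Nonempty (Fin n)] (θ : Fin n → ℝ)
    (hnd : ∀ j k, j ≠ k → sin (θ j - θ k) ≠ 0)
    (h : (0:ℝ×ℝ) ∉ convexHull ℝ (Set.range fun j => (cos (θ j), sin (θ j)))) :
    ∃ i, ∀ j, j ≠ i → 0 < sin (θ j - θ i) := by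
  obtain ⟨a, b, hab⟩ := (notMem_convexHull_iff _).1 h
  simp only at hab
  set z : ℂ := ⟨a, b⟩ with hz'
  have hz : z ≠ 0 := by
    intro hz0
    have ha : a = 0 := congrArg Complex.re hz0
    have hb : b = 0 := congrArg Complex.im hz0
    have := hab (Classical.arbitrary _)
    rw [ha, hb] at this; norm_num at this
  set φ := Complex.arg z with hφ'
  have hr : 0 < ‖z‖ := norm_pos_iff.2 hz
  have hcos : ∀ j, 0 < cos (θ j - φ) := by
    intro j
    have h1 : Real.cos φ = a / ‖z‖ := by
      rw [hφ', Complex.cos_arg hz, hz']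
    have h2 : Real.sin φ = b / ‖z‖ := by
      rw [hφ', Complex.sin_arg, hz']
    have h3 : cos (θ j - φ) = (a * cos (θ j) + b * sin (θ j)) / ‖z‖ := by
      rw [Real.cos_sub, h1, h2]; field_simp
    rw [h3]
    exact div_pos (hab j) hr
  set k : Fin n → ℤ := fun j => toIcoDiv two_pi_pos' 0 (θ j - φ + π / 2) with hk'
  set ψ : Fin n → ℝ := fun j => toIcoMod two_pi_pos' 0 (θ j - φ + π / 2) with hψ'
  have hdecomp : ∀ j, θ j - φ + π / 2 = ψ j + (k j : ℝ) * (2 * π) := by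
    intro j
    have := toIcoMod_add_toIcoDiv_zsmul two_pi_pos' 0 (θ j - φ + π / 2)
    rw [zsmul_eq_mul] at this
    linarith [this]
  have hψsin : ∀ j, sin (ψ j) = cos (θ j - φ) := by
    intro j
    have h1 : ψ j = (θ j - φ + π / 2) - (k j : ℝ) * (2 * π) := by linarith [hdecomp j]
    rw [h1, Real.sin_sub_int_mul_two_pi, Real.sin_add_pi_div_two]
  have hψmem : ∀ j, ψ j ∈ Set.Ico (0:ℝ) (2 * π) := by
    intro j
    have := toIcoMod_mem_Ico two_pi_pos' 0 (θ j - φ + π / 2)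
    rwa [zero_add] at this
  have hψlt : ∀ j, 0 < ψ j ∧ ψ j < π := by
    intro j
    have hs : 0 < sin (ψ j) := by rw [hψsin j]; exact hcos j
    constructor
    · rcases (hψmem j).1.eq_or_lt with he | hlt
      · rw [← he, Real.sin_zero] at hs; norm_num at hs
      · exact hlt
    · by_contra hge
      push_neg at hge
      have := sin_nonpos_of_mem (ψ j) hge (le_of_lt (hψmem j).2)
      linarith
  obtain ⟨i, -, hi⟩ := Finset.exists_min_image Finset.univ ψ ⟨Classical.arbitrary _, Finset.mem_univ _⟩
  refine ⟨i, fun j hj => ?_⟩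
  have hsin_eq : sin (θ j - θ i) = sin (ψ j - ψ i) := by
    have h1 : θ j - θ i = ψ j - ψ i + ((k j - k i : ℤ) : ℝ) * (2 * π) := by
      push_cast
      linarith [hdecomp j, hdecomp i]
    rw [h1, Real.sin_add_int_mul_two_pi]
  rw [hsin_eq]
  have hne : ψ j ≠ ψ i := by
    intro he
    apply hnd j i hj
    rw [hsin_eq, he, sub_self, Real.sin_zero]
  exact Real.sin_pos_of_pos_of_lt_pi
    (sub_pos.2 (lt_of_le_of_ne (hi j (Finset.mem_univ j)) (Ne.symm hne)))
    (by linarith [(hψlt j).2, (hψlt i).1])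


lemma prob_B (i : Fin n) :
    Measure.pi (fun _ : Fin n => circν) {θ | ∀ j, j ≠ i → 0 < sin (θ j - θ i)}
      = 2⁻¹ ^ (n - 1) := by
  classical
  set p : Fin n → Prop := fun j => j = i with hp
  have hmp := measurePreserving_piEquivPiSubtypeProd (fun _ : Fin n => circν) p
  set e := MeasurableEquiv.piEquivPiSubtypeProd (fun _ : Fin n => ℝ) p with he
  have hpi : p i := rfl
  set S : Set (({j : Fin n // p j} → ℝ) × ({j : Fin n // ¬ p j} → ℝ)) :=
    {q | ∀ j : {j : Fin n // ¬ p j}, 0 < sin (q.2 j - q.1 ⟨i, hpi⟩)} with hS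
  have hSm : MeasurableSet S := by
    have h1 : S = ⋂ j : {j : Fin n // ¬ p j},
        {q : ({j : Fin n // p j} → ℝ) × ({j : Fin n // ¬ p j} → ℝ) |
          0 < sin (q.2 j - q.1 ⟨i, hpi⟩)} := by
      ext q; simp [hS]
    rw [h1]
    refine MeasurableSet.iInter fun j => measurableSet_lt measurable_const ?_
    have : Measurable fun q : ({j : Fin n // p j} → ℝ) × ({j : Fin n // ¬ p j} → ℝ) =>
        sin (q.2 j - q.1 ⟨i, hpi⟩) := by fun_prop
    exact this
  have hpre : e ⁻¹' S = {θ | ∀ j, j ≠ i → 0 < sin (θ j - θ i)} := by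
    ext θ
    simp only [Set.mem_preimage, hS, Set.mem_setOf_eq]
    constructor
    · intro hq j hj
      exact hq ⟨j, hj⟩
    · intro hq j
      exact hq j j.2
  rw [← hpre, hmp.measure_preimage hSm.nullMeasurableSet, Measure.prod_apply hSm]
  have hslice : ∀ x : {j : Fin n // p j} → ℝ,
      (Measure.pi fun _ : {j : Fin n // ¬ p j} => circν) (Prod.mk x ⁻¹' S)
        = 2⁻¹ ^ (n - 1) := by
    intro x
    have h2 : Prod.mk x ⁻¹' S
        = Set.pi Set.univ (fun _ : {j : Fin n // ¬ p j} => {u | 0 < sin (u - x ⟨i, hpi⟩)}) := by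
      ext s
      simp [hS, Set.mem_pi]
    rw [h2, Measure.pi_pi]
    simp only [circν_half]
    rw [Finset.prod_const, Finset.card_univ]
    congr 1
    rw [Fintype.card_subtype_compl, Fintype.card_subtype_eq, Fintype.card_fin]
  simp only [hslice]
  rw [lintegral_const, measure_univ, mul_one]

lemma prob_null (j k : Fin n) (hjk : j ≠ k) :
    Measure.pi (fun _ : Fin n => circν) {θ | sin (θ j - θ k) = 0} = 0 := by
  classical
  set p : Fin n → Prop := fun l => l = k with hp
  have hmp := measurePreserving_piEquivPiSubtypeProd (fun _ : Fin n => circν) p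
  set e := MeasurableEquiv.piEquivPiSubtypeProd (fun _ : Fin n => ℝ) p with he
  have hpk : p k := rfl
  have hpj : ¬ p j := hjk
  set S : Set (({l : Fin n // p l} → ℝ) × ({l : Fin n // ¬ p l} → ℝ)) :=
    {q | sin (q.2 ⟨j, hpj⟩ - q.1 ⟨k, hpk⟩) = 0} with hS
  have hSm : MeasurableSet S := by
    have : Measurable fun q : ({l : Fin n // p l} → ℝ) × ({l : Fin n // ¬ p l} → ℝ) =>
        sin (q.2 ⟨j, hpj⟩ - q.1 ⟨k, hpk⟩) :=
      by fun_prop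
    exact this (measurableSet_singleton 0)
  have hpre : e ⁻¹' S = {θ | sin (θ j - θ k) = 0} := by
    ext θ
    exact Iff.rfl
  rw [← hpre, hmp.measure_preimage hSm.nullMeasurableSet, Measure.prod_apply hSm]
  have hslice : ∀ x : {l : Fin n // p l} → ℝ,
      (Measure.pi fun _ : {l : Fin n // ¬ p l} => circν) (Prod.mk x ⁻¹' S) = 0 := by
    intro x
    have h2 : Prod.mk x ⁻¹' S
        = Function.eval (⟨j, hpj⟩ : {l : Fin n // ¬ p l}) ⁻¹'
            {u : ℝ | sin (u - x ⟨k, hpk⟩) = 0} := by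
      ext s; simp [hS, Function.eval]
    rw [h2]
    exact Measure.pi_eval_preimage_null _ (circν_sin_zero _)
  simp only [hslice]
  rw [lintegral_zero]


/-- measure of the event under the pi measure -/
lemma pi_measure_conv (hn : 2 ≤ n) :
    Measure.pi (fun _ : Fin n => circν)
      {θ : Fin n → ℝ | (0:ℝ×ℝ) ∈ convexHull ℝ (Set.range fun i => (cos (θ i), sin (θ i)))}
      = 1 - n * 2⁻¹ ^ (n - 1) := by
  classical
  haveI : Nonempty (Fin n) := ⟨⟨0, by omega⟩⟩
  set P := Measure.pi (fun _ : Fin n => circν) with hP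
  set F : (Fin n → ℝ) → (Fin n → ℝ × ℝ) := fun θ i => (cos (θ i), sin (θ i)) with hF
  have hFm : Measurable F := by
    rw [hF]; fun_prop
  set G := {θ : Fin n → ℝ | (0:ℝ×ℝ) ∈ convexHull ℝ (Set.range fun i => (cos (θ i), sin (θ i)))}
    with hG
  have hGF : G = F ⁻¹' {y : Fin n → ℝ × ℝ | (0:ℝ×ℝ) ∈ convexHull ℝ (Set.range y)} := rfl
  have hGm : MeasurableSet G := hGF ▸ measurableSet_E.preimage hFm
  set B : Fin n → Set (Fin n → ℝ) := fun i => {θ | ∀ j, j ≠ i → 0 < sin (θ j - θ i)} with hB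
  have hBm : ∀ i, MeasurableSet (B i) := by
    intro i
    have : B i = ⋂ j, ⋂ (_ : j ≠ i), {θ : Fin n → ℝ | 0 < sin (θ j - θ i)} := by
      ext θ; simp [hB]
    rw [this]
    refine MeasurableSet.iInter fun j => MeasurableSet.iInter fun _ =>
      measurableSet_lt measurable_const (by fun_prop)
  set N := {θ : Fin n → ℝ | ∃ j k, j ≠ k ∧ sin (θ j - θ k) = 0} with hN
  have hNnull : P N = 0 := by
    have hsub : N ⊆ ⋃ j, ⋃ k, ⋃ (_ : j ≠ k), {θ : Fin n → ℝ | sin (θ j - θ k) = 0} := by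
      rintro θ ⟨j, k, hjk, h⟩
      simp only [Set.mem_iUnion]
      exact ⟨j, k, hjk, h⟩
    refine measure_mono_null hsub ?_
    refine measure_iUnion_null fun j => measure_iUnion_null fun k => measure_iUnion_null fun hjk =>
      prob_null j k hjk
  -- Gᶜ =ᵐ ⋃ B i
  have hBsub : (⋃ i, B i) ⊆ Gᶜ := by
    rintro θ ⟨_, ⟨i, rfl⟩, hθ⟩
    exact bwd_lemma θ i hθ
  have hGBsub : Gᶜ \ N ⊆ ⋃ i, B i := by
    rintro θ ⟨hθ, hθN⟩
    have hnd : ∀ j k, j ≠ k → sin (θ j - θ k) ≠ 0 := by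
      intro j k hjk h
      exact hθN ⟨j, k, hjk, h⟩
    obtain ⟨i, hi⟩ := fwd_lemma θ hnd hθ
    exact Set.mem_iUnion.2 ⟨i, hi⟩
  have hdisj : Pairwise (Function.onFun Disjoint B) := by
    intro i k hik
    rw [Function.onFun, Set.disjoint_left]
    intro θ hθi hθk
    have h1 := hθi k (Ne.symm hik)
    have h2 := hθk i hik
    rw [show θ i - θ k = -(θ k - θ i) by ring, Real.sin_neg] at h2
    linarith
  have hUB : P (⋃ i, B i) = n * 2⁻¹ ^ (n - 1) := by
    rw [measure_iUnion hdisj hBm]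
    have hPB : ∀ i, P (B i) = 2⁻¹ ^ (n - 1) := fun i => prob_B i
    simp only [hPB]
    rw [tsum_fintype, Finset.sum_const, Finset.card_univ, Fintype.card_fin, nsmul_eq_mul]
  have hGc : P Gᶜ = n * 2⁻¹ ^ (n - 1) := by
    have h1 : P Gᶜ ≤ P (⋃ i, B i) + P N := by
      calc P Gᶜ ≤ P ((⋃ i, B i) ∪ N) := measure_mono (fun θ hθ => by
        by_cases hθN : θ ∈ N
        · exact Or.inr hθN
        · exact Or.inl (hGBsub ⟨hθ, hθN⟩))
      _ ≤ P (⋃ i, B i) + P N := measure_union_le _ _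
    have h2 : P (⋃ i, B i) ≤ P Gᶜ := measure_mono hBsub
    rw [hNnull, add_zero] at h1
    rw [hUB] at h1 h2
    exact le_antisymm h1 h2
  have : P G = 1 - P Gᶜ := by
    haveI : IsProbabilityMeasure P := by rw [hP]; infer_instance
    rw [measure_compl hGm (measure_ne_top _ _), measure_univ]
    rw [ENNReal.sub_sub_cancel ENNReal.one_ne_top prob_le_one]
  rw [this, hGc]

/-- If `X 1, ..., X n` are i.i.d. uniform on the unit circle in `ℝ²` (the law being
the image of the normalized Lebesgue measure on `[0,2π)` under `θ ↦ (cos θ, sin θ)`),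
with `n ≥ 2`, then `P(0 ∈ conv{X 1, ..., X n}) = 1 - n·(1/2)^(n-1)`. -/
theorem stmt10 {Ω : Type*} [MeasurableSpace Ω] (μ : Measure Ω) [IsProbabilityMeasure μ]
    (n : ℕ) (hn : 2 ≤ n)
    (X : Fin n → Ω → ℝ × ℝ) (hmeas : ∀ i, Measurable (X i))
    (hindep : iIndepFun X μ)
    (hlaw : ∀ i, Measure.map (X i) μ =
      Measure.map (fun θ : ℝ => (Real.cos θ, Real.sin θ))
        ((ENNReal.ofReal (2 * π))⁻¹ • volume.restrict (Set.Ico (0:ℝ) (2 * π)))) :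
    μ {ω | (0:ℝ × ℝ) ∈ convexHull ℝ (Set.range fun i => X i ω)} =
      ENNReal.ofReal (1 - n * ((1:ℝ)/2) ^ (n-1)) := by
  classical
  haveI : Nonempty (Fin n) := ⟨⟨0, by omega⟩⟩
  set c : ℝ → ℝ × ℝ := fun θ => (cos θ, sin θ) with hc
  have hcm : Measurable c := by rw [hc]; fun_prop
  have hlaw' : ∀ i, Measure.map (X i) μ = circν.map c := fun i => hlaw i
  set J : Ω → (Fin n → ℝ × ℝ) := fun ω i => X i ω with hJ
  have hJm : Measurable J := measurable_pi_lambda _ hmeas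
  have hE := measurableSet_E (n := n)
  have hev : {ω | (0:ℝ×ℝ) ∈ convexHull ℝ (Set.range fun i => X i ω)}
      = J ⁻¹' {y : Fin n → ℝ × ℝ | (0:ℝ×ℝ) ∈ convexHull ℝ (Set.range y)} := rfl
  rw [hev, ← Measure.map_apply hJm hE]
  haveI hprob : ∀ i, IsProbabilityMeasure (μ.map (X i)) := fun i =>
    Measure.isProbabilityMeasure_map (hmeas i).aemeasurable
  haveI hsf : ∀ i : Fin n, SigmaFinite (μ.map (X i)) := fun i => inferInstance
  have hjoint : μ.map J = Measure.pi (fun i => μ.map (X i)) := by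
    refine (Measure.pi_eq (μ := fun i => μ.map (X i)) fun s hs => ?_).symm
    rw [Measure.map_apply hJm (MeasurableSet.univ_pi hs)]
    have hpre : J ⁻¹' (Set.univ.pi s) = ⋂ i ∈ Finset.univ, X i ⁻¹' s i := by
      ext ω
      simp [hJ, Set.mem_pi]
    rw [hpre, hindep.measure_inter_preimage_eq_mul Finset.univ (fun i _ => hs i)]
    refine Finset.prod_congr rfl fun i _ => ?_
    rw [Measure.map_apply (hmeas i) (hs i)]
  have hmarg : (fun i : Fin n => μ.map (X i)) = fun _ => circν.map c := by
    funext i; exact hlaw' i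
  haveI : IsProbabilityMeasure (circν.map c) := Measure.isProbabilityMeasure_map hcm.aemeasurable
  have hpimap : Measure.pi (fun _ : Fin n => circν.map c)
      = (Measure.pi fun _ : Fin n => circν).map (fun θ i => c (θ i)) :=
    (measurePreserving_pi (fun _ : Fin n => circν) (fun _ => circν.map c)
      (fun _ => ⟨hcm, rfl⟩)).map_eq.symm
  rw [hjoint, hmarg, hpimap, Measure.map_apply (by fun_prop) hE]
  have hfinal := pi_measure_conv (n := n) hn
  have hpre2 : (fun θ : Fin n → ℝ => fun i => c (θ i)) ⁻¹'
      {y : Fin n → ℝ × ℝ | (0:ℝ×ℝ) ∈ convexHull ℝ (Set.range y)}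
      = {θ : Fin n → ℝ | (0:ℝ×ℝ) ∈ convexHull ℝ (Set.range fun i => (cos (θ i), sin (θ i)))} := rfl
  rw [hpre2, hfinal]
  -- arithmetic
  have h1 : ENNReal.ofReal (1 - n * ((1:ℝ)/2) ^ (n-1))
      = 1 - ENNReal.ofReal (n * ((1:ℝ)/2) ^ (n-1)) := by
    rw [ENNReal.ofReal_sub _ (by positivity), ENNReal.ofReal_one]
  have h2 : ENNReal.ofReal (n * ((1:ℝ)/2) ^ (n-1)) = n * 2⁻¹ ^ (n-1) := by
    rw [ENNReal.ofReal_mul (by positivity), ENNReal.ofReal_pow (by norm_num),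
      ENNReal.ofReal_natCast]
    congr 2
    rw [one_div, ENNReal.ofReal_inv_of_pos (by norm_num)]
    norm_num
  rw [h1, h2]
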